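/- Let Ω ⊂ ℝ² be a nonempty bounded open set, and let b be a real-valued function that is continuous on the closure of Ω, twice continuously differentiable on Ω, and strictly positive on Ω. Let z⁰ ∈ Ω and suppose that the connected component C of the level set {x ∈ closure(Ω) : b(x) = b(z⁰)} containing z⁰ is disjoint from the boundary ∂Ω. Then for every λ ∈ ℝ there exists a unique function z : [0,∞) → Ω with z(0) = z⁰ that is differentiable and satisfies z'(t) = −λ·∇⊥b(z(t))/b(z(t)) for all t ≥ 0; moreover z(t) ∈ C, and in particular b(z(t)) = b(z⁰), for all t ≥ 0. -/

import Mathlib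

open Set Metric
open scoped Manifold

/-- Remark 1.3: global existence and uniqueness for the limiting point-vortex ODE
`ż = -λ ∇⊥b(z)/b(z)`, `z(0) = z⁰`, when the connected component of the level set of `b`
through `z⁰` does not touch the boundary; the solution stays on that component. -/
theorem vortex_ODE_global_wellposed
    (Ω : Set (ℝ × ℝ)) (hΩopen : IsOpen Ω) (hΩne : Ω.Nonempty)
    (hΩbd : Bornology.IsBounded Ω)
    (b : ℝ × ℝ → ℝ)
    (hbc : ContinuousOn b (closure Ω))
    (hb2 : ContDiffOn ℝ 2 b Ω)
    (hbpos : ∀ x ∈ Ω, 0 < b x)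
    (z0 : ℝ × ℝ) (hz0 : z0 ∈ Ω)
    (hC : connectedComponentIn {x ∈ closure Ω | b x = b z0} z0 ∩ frontier Ω = ∅)
    (lam : ℝ) :
    ∃ z : ℝ → ℝ × ℝ, z 0 = z0 ∧
      (∀ t ∈ Set.Ici (0:ℝ),
        z t ∈ Ω ∧
        z t ∈ connectedComponentIn {x ∈ closure Ω | b x = b z0} z0 ∧
        b (z t) = b z0 ∧
        HasDerivWithinAt z
          ((-lam / b (z t)) • (-(fderiv ℝ b (z t) (0, 1)), fderiv ℝ b (z t) (1, 0)))
          (Set.Ici 0) t) ∧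
      (∀ w : ℝ → ℝ × ℝ, w 0 = z0 →
        (∀ t ∈ Set.Ici (0:ℝ),
          w t ∈ Ω ∧
          HasDerivWithinAt w
            ((-lam / b (w t)) • (-(fderiv ℝ b (w t) (0, 1)), fderiv ℝ b (w t) (1, 0)))
            (Set.Ici 0) t) →
        ∀ t ∈ Set.Ici (0:ℝ), w t = z t) := by
  classical
  -- The level set `Kset` and its connected component through `z0`.
  set Kset : Set (ℝ × ℝ) := {x ∈ closure Ω | b x = b z0} with hKset_def
  have hz0cl : z0 ∈ closure Ω := subset_closure hz0
  have hz0K : z0 ∈ Kset := ⟨hz0cl, rfl⟩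
  have hKsub : Kset ⊆ closure Ω := fun x hx => hx.1
  have hKclosed : IsClosed Kset := by
    have h := hbc.preimage_isClosed_of_isClosed isClosed_closure
      (isClosed_singleton (x := b z0))
    have he : Kset = closure Ω ∩ b ⁻¹' {b z0} := by
      ext x; simp [hKset_def]
    rw [he]; exact h
  have hKcomp : IsCompact Kset := hΩbd.isCompact_closure.of_isClosed_subset hKclosed hKsub
  haveI : CompactSpace Kset := isCompact_iff_compactSpace.mp hKcomp
  set p : Kset := ⟨z0, hz0K⟩ with hp_def
  have hCompIm : connectedComponentIn Kset z0 = Subtype.val '' connectedComponent p :=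
    connectedComponentIn_eq_image hz0K
  -- The part of `Kset` over the frontier is compact and misses the connected component.
  set Bs : Set Kset := Subtype.val ⁻¹' (frontier Ω) with hBs_def
  have hBs_closed : IsClosed Bs := isClosed_frontier.preimage continuous_subtype_val
  have hBsCC : Bs ∩ connectedComponent p = ∅ := by
    ext y
    simp only [mem_inter_iff, mem_empty_iff_false, iff_false, not_and]
    intro hy1 hy2
    have hmem : (y : ℝ × ℝ) ∈ connectedComponentIn Kset z0 ∩ frontier Ω :=
      ⟨hCompIm ▸ ⟨y, hy2, rfl⟩, hy1⟩
    rw [hC] at hmem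
    exact hmem
  -- Separate the component from the frontier by a clopen set.
  obtain ⟨Z, hZempty⟩ : ∃ Z : {Z : Set Kset // IsClopen Z ∧ p ∈ Z}, Bs ∩ (Z : Set Kset) = ∅ := by
    haveI : Nonempty {Z : Set Kset // IsClopen Z ∧ p ∈ Z} :=
      ⟨⟨univ, isClopen_univ, mem_univ _⟩⟩
    apply hBs_closed.isCompact.elim_directed_family_closed
      (fun Z : {Z : Set Kset // IsClopen Z ∧ p ∈ Z} => (Z : Set Kset))
      (fun Z => Z.2.1.1)
    · rw [← connectedComponent_eq_iInter_isClopen p]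
      exact hBsCC
    · intro Z1 Z2
      exact ⟨⟨Z1.1 ∩ Z2.1, Z1.2.1.inter Z2.2.1, ⟨Z1.2.2, Z2.2.2⟩⟩,
        inter_subset_left, inter_subset_right⟩
  set V' : Set (ℝ × ℝ) := Subtype.val '' (Z : Set Kset) with hV'def
  have hV'comp : IsCompact V' := Z.2.1.1.isCompact.image continuous_subtype_val
  have hz0V' : z0 ∈ V' := ⟨p, Z.2.2, rfl⟩
  have hV'K : V' ⊆ Kset := by rintro x ⟨y, _, rfl⟩; exact y.2
  have hCCsub : connectedComponentIn Kset z0 ⊆ V' := by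
    rw [hCompIm, hV'def]
    exact image_mono (Z.2.1.connectedComponent_subset Z.2.2)
  have hV'front : ∀ x ∈ V', x ∉ frontier Ω := by
    rintro x ⟨y, hyZ, rfl⟩ hxf
    have : y ∈ Bs ∩ (Z : Set Kset) := ⟨hxf, hyZ⟩
    rw [hZempty] at this
    exact this
  have hclΩ : closure Ω ⊆ Ω ∪ frontier Ω := by
    intro x hx
    by_cases h : x ∈ Ω
    · exact Or.inl h
    · refine Or.inr ?_
      rw [frontier, hΩopen.interior_eq]
      exact ⟨hx, h⟩
  have hV'Ω : V' ⊆ Ω := by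
    intro x hx
    rcases hclΩ (hKsub (hV'K hx)) with h | h
    · exact h
    · exact absurd h (hV'front x hx)
  -- The complementary compact piece of `Kset`.
  set Vc : Set (ℝ × ℝ) := Subtype.val '' ((Z : Set Kset)ᶜ) with hVcdef
  have hVccomp : IsCompact Vc := Z.2.1.compl.1.isCompact.image continuous_subtype_val
  have hV'Vc : ∀ x ∈ V', x ∉ Vc := by
    rintro x ⟨y, hy, rfl⟩ ⟨y', hy', he⟩
    have : y' = y := Subtype.val_injective he
    rw [this] at hy'
    exact hy' hy
  -- Choose a thickening of `V'` inside `Ω` avoiding `Vc`.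
  obtain ⟨ε₁, hε₁, hε₁sub⟩ := hV'comp.exists_cthickening_subset_open hΩopen hV'Ω
  have hVcopen : IsOpen Vcᶜ := hVccomp.isClosed.isOpen_compl
  obtain ⟨ε₂, hε₂, hε₂sub⟩ := hV'comp.exists_cthickening_subset_open hVcopen
    (fun x hx => hV'Vc x hx)
  set ε := min ε₁ ε₂ with hεdef
  have hε : 0 < ε := lt_min hε₁ hε₂
  set Ubar := cthickening ε V' with hUbardef
  set U := thickening ε V' with hUdef
  have hUbarΩ : Ubar ⊆ Ω := (cthickening_mono (min_le_left _ _) V').trans hε₁sub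
  have hUbarVc : ∀ x ∈ Ubar, x ∉ Vc := fun x hx =>
    ((cthickening_mono (min_le_right _ _) V').trans hε₂sub) hx
  have hV'U : V' ⊆ U := self_subset_thickening hε V'
  have hUUbar : U ⊆ Ubar := thickening_subset_cthickening ε V'
  have hUopen : IsOpen U := isOpen_thickening
  have hUbarcomp : IsCompact Ubar := hV'comp.cthickening
  -- Trapping property: level-set points in `Ubar` lie in `V'`.
  have htrap : ∀ x ∈ Ubar, b x = b z0 → x ∈ V' := by
    intro x hx hbx
    have hxK : x ∈ Kset := ⟨subset_closure (hUbarΩ hx), hbx⟩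
    by_contra hxV'
    exact hUbarVc x hx ⟨⟨x, hxK⟩, fun h => hxV' ⟨⟨x, hxK⟩, h, rfl⟩, rfl⟩
  -- A further thickening `W` inside `Ω`.
  obtain ⟨ε', hε', hε'sub⟩ := hUbarcomp.exists_cthickening_subset_open hΩopen hUbarΩ
  set W := thickening ε' Ubar with hWdef
  set Wbar := cthickening ε' Ubar with hWbardef
  have hUbarW : Ubar ⊆ W := self_subset_thickening hε' Ubar
  have hWWbar : W ⊆ Wbar := thickening_subset_cthickening ε' Ubar
  have hWbarΩ : Wbar ⊆ Ω := hε'sub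
  have hWbarcomp : IsCompact Wbar := hUbarcomp.cthickening
  -- A smooth cutoff: `1` on `Ubar`, `0` off `W`.
  obtain ⟨φ₀, hφ0, hφ1, hφ01⟩ :=
    exists_contMDiffMap_zero_one_of_isClosed (n := ⊤) (𝓘(ℝ, ℝ × ℝ)) (isOpen_thickening.isClosed_compl)
      (isClosed_cthickening (δ := ε) (E := V'))
      (disjoint_left.mpr fun x hxW hxU => hxW (hUbarW hxU))
  set φ : ℝ × ℝ → ℝ := (φ₀ : (ℝ × ℝ) → ℝ) with hφdef
  have hφsm : ContDiff ℝ 1 φ := (contMDiff_iff_contDiff.mp φ₀.contMDiff).of_le (mod_cast le_top)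
  have hφ0' : ∀ y, y ∉ W → φ y = 0 := fun y hy => hφ0 hy
  have hφ1' : ∀ y, y ∈ Ubar → φ y = 1 := fun y hy => hφ1 hy
  -- The vector field and its cutoff version.
  set F : (ℝ × ℝ) → (ℝ × ℝ) :=
    fun x => (-lam / b x) • (-(fderiv ℝ b x (0, 1)), fderiv ℝ b x (1, 0)) with hFdef
  set G : (ℝ × ℝ) → (ℝ × ℝ) := fun x => φ x • F x with hGdef
  have hb1 : ContDiffOn ℝ 1 b Ω := hb2.of_le one_le_two
  have hfdc : ContDiffOn ℝ 1 (fderiv ℝ b) Ω := hb2.fderiv_of_isOpen hΩopen (by norm_num)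
  have hFc1 : ContDiffOn ℝ 1 F Ω := by
    rw [hFdef]
    exact (contDiffOn_const.div hb1 fun x hx => (hbpos x hx).ne').smul
      (((hfdc.clm_apply contDiffOn_const).neg).prodMk (hfdc.clm_apply contDiffOn_const))
  have hGc1 : ContDiff ℝ 1 G := by
    rw [contDiff_iff_contDiffAt]
    intro x
    by_cases hx : x ∈ Ω
    · exact hφsm.contDiffAt.smul (hFc1.contDiffAt (hΩopen.mem_nhds hx))
    · have hxW : x ∈ Wbarᶜ := fun h => hx (hWbarΩ h)
      refine contDiffAt_const (c := (0 : ℝ × ℝ)).congr_of_eventuallyEq ?_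
      filter_upwards [hWbarcomp.isClosed.isOpen_compl.mem_nhds hxW] with y hy
      have hy0 : φ y = 0 := hφ0' y fun hyW => hy (hWWbar hyW)
      simp [hGdef, hy0]
  have hGsupp : HasCompactSupport G := by
    apply HasCompactSupport.intro hWbarcomp
    intro x hx
    have hx0 : φ x = 0 := hφ0' x fun h => hx (hWWbar h)
    simp [hGdef, hx0]
  obtain ⟨L, hL⟩ := ContDiff.lipschitzWith_of_hasCompactSupport hGsupp hGc1 one_ne_zero
  obtain ⟨Cb, hCb⟩ := hGsupp.exists_bound_of_continuous hGc1.continuous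
  set C0 : ℝ := max Cb 0 with hC0def
  have hC0 : 0 ≤ C0 := le_max_right _ _
  have hCb' : ∀ x, ‖G x‖ ≤ C0 := fun x => (hCb x).trans (le_max_left _ _)
  -- `b` is infinitesimally conserved along `F`.
  have hDF : ∀ x ∈ Ω, fderiv ℝ b x (F x) = 0 := by
    intro x hx
    have key : ∀ p q : ℝ, fderiv ℝ b x (p, q) =
        p * fderiv ℝ b x (1, 0) + q * fderiv ℝ b x (0, 1) := by
      intro p q
      have h : ((p, q) : ℝ × ℝ) = p • ((1:ℝ), (0:ℝ)) + q • ((0:ℝ), (1:ℝ)) := by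
        simp [Prod.ext_iff]
      rw [h, map_add, map_smul, map_smul, smul_eq_mul, smul_eq_mul]
    rw [hFdef]
    simp only
    rw [map_smul, key, smul_eq_mul]
    ring
  -- Solutions of `ż = G z` on every `[0, n]`.
  have hPL : ∀ n : ℕ, IsPicardLindelof (fun _ x => G x) (tmin := 0) (tmax := n)
      ⟨0, le_rfl, n.cast_nonneg⟩ z0 ⟨C0 * n, by positivity⟩ 0 ⟨C0, hC0⟩ L := by
    intro n
    refine ⟨fun t _ => hL.lipschitzOnWith,
      fun x _ => continuousOn_const, fun t _ x _ => hCb' x, ?_⟩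
    show C0 * max ((n:ℝ) - 0) (0 - 0) ≤ C0 * n - ((0 : NNReal) : ℝ)
    rw [sub_zero, sub_self, max_eq_left n.cast_nonneg, NNReal.coe_zero, sub_zero]
  choose f hf0 hfd using fun n : ℕ => (hPL n).exists_eq_forall_mem_Icc_hasDerivWithinAt₀
  have hmem : ∀ (N : ℕ) (a t : ℝ), 0 ≤ a → a ≤ t → t < N →
      Icc (0:ℝ) N ∈ nhdsWithin t (Ici a) := by
    intro N a t ha hat htN
    apply Filter.mem_of_superset
      (Filter.inter_mem (mem_nhdsWithin_of_mem_nhds (Iio_mem_nhds htN)) self_mem_nhdsWithin)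
    rintro s ⟨hs1, hs2⟩
    exact ⟨ha.trans hs2, le_of_lt hs1⟩
  have hagree : ∀ m n : ℕ, ∀ s : ℝ, 0 ≤ s → s ≤ m → s ≤ n → f m s = f n s := by
    intro m n s hs hsm hsn
    have h := ODE_solution_unique (v := fun _ x => G x) (K := L) (f := f m) (g := f n)
      (a := 0) (b := min (m:ℝ) n) (fun _ => hL)
      (fun u hu => (hfd m u ⟨hu.1, hu.2.trans (min_le_left _ _)⟩).continuousWithinAt.mono
        (Icc_subset_Icc le_rfl (min_le_left _ _)))
      (fun u hu => (hfd m u ⟨hu.1, (le_of_lt hu.2).trans (min_le_left _ _)⟩).mono_of_mem_nhdsWithin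
        (hmem m u u hu.1 le_rfl (lt_of_lt_of_le hu.2 (min_le_left _ _))))
      (fun u hu => (hfd n u ⟨hu.1, hu.2.trans (min_le_right _ _)⟩).continuousWithinAt.mono
        (Icc_subset_Icc le_rfl (min_le_right _ _)))
      (fun u hu => (hfd n u ⟨hu.1, (le_of_lt hu.2).trans (min_le_right _ _)⟩).mono_of_mem_nhdsWithin
        (hmem n u u hu.1 le_rfl (lt_of_lt_of_le hu.2 (min_le_right _ _))))
      ((hf0 m).trans (hf0 n).symm)
    exact h ⟨hs, le_min hsm hsn⟩
  -- The global solution.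
  set z : ℝ → ℝ × ℝ := fun t => f (⌊t⌋₊ + 1) t with hzdef
  have hfloor : ∀ t : ℝ, t < ((⌊t⌋₊ + 1 : ℕ) : ℝ) := by
    intro t; push_cast; exact Nat.lt_floor_add_one t
  have hzf : ∀ (N : ℕ) (t : ℝ), 0 ≤ t → t ≤ N → z t = f N t := by
    intro N t ht htN
    exact hagree (⌊t⌋₊ + 1) N t ht (hfloor t).le htN
  have hz0' : z 0 = z0 := by
    rw [hzdef]
    simp only [Nat.floor_zero, Nat.zero_add]
    exact hf0 1
  have hzderiv : ∀ t : ℝ, 0 ≤ t → HasDerivWithinAt z (G (z t)) (Ici 0) t := by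
    intro t ht
    have htN : t < ((⌊t⌋₊ + 1 : ℕ) : ℝ) := hfloor t
    have h1 : HasDerivWithinAt (f (⌊t⌋₊ + 1)) (G (f (⌊t⌋₊ + 1) t)) (Ici 0) t :=
      (hfd (⌊t⌋₊ + 1) t ⟨ht, htN.le⟩).mono_of_mem_nhdsWithin (hmem _ 0 t le_rfl ht htN)
    have hzt : z t = f (⌊t⌋₊ + 1) t := rfl
    rw [hzt]
    refine h1.congr_of_eventuallyEq ?_ hzt
    filter_upwards [hmem _ 0 t le_rfl ht htN] with s hs
    exact hzf _ s hs.1 hs.2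
  have hzcont : ContinuousOn z (Ici 0) := fun t ht => (hzderiv t ht).continuousWithinAt
  -- Conservation of `b` along curves with velocity proportional to `F`.
  have hbconst : ∀ (u : ℝ → ℝ × ℝ) (c : ℝ → ℝ) (t : ℝ), 0 ≤ t →
      ContinuousOn u (Icc 0 t) →
      (∀ s, s ∈ Icc (0:ℝ) t → u s ∈ Ω ∧ HasDerivWithinAt u (c s • F (u s)) (Ici s) s) →
      ∀ s ∈ Icc (0:ℝ) t, b (u s) = b (u 0) := by
    intro u c t ht hucont hu
    have h := constant_of_has_deriv_right_zero (f := b ∘ u) (a := 0) (b := t)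
      (hbc.comp hucont fun s hs => subset_closure (hu s hs).1) ?_
    · intro s hs
      simpa using h s hs
    · intro s hs
      obtain ⟨huΩ, hud⟩ := hu s (Ico_subset_Icc_self hs)
      have hdb : DifferentiableAt ℝ b (u s) :=
        (hb1.differentiableOn one_ne_zero).differentiableAt (hΩopen.mem_nhds huΩ)
      have hcomp := hdb.hasFDerivAt.comp_hasDerivWithinAt s hud
      have hval : fderiv ℝ b (u s) (c s • F (u s)) = 0 := by
        rw [map_smul, hDF _ huΩ, smul_zero]
      rwa [hval] at hcomp
  -- Trapping: the solution stays in `V'`.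
  have hmaster : ∀ t : ℝ, 0 ≤ t → ∀ s, s ∈ Icc (0:ℝ) t → z s ∈ V' := by
    intro t ht
    set S := {r : ℝ | r ∈ Icc (0:ℝ) t ∧ ∀ s ∈ Icc (0:ℝ) r, z s ∈ V'} with hSdef
    have h0S : (0:ℝ) ∈ S := by
      refine ⟨⟨le_rfl, ht⟩, fun s hs => ?_⟩
      have hs0 : s = 0 := le_antisymm hs.2 hs.1
      rw [hs0, hz0']
      exact hz0V'
    have hSne : S.Nonempty := ⟨0, h0S⟩
    have hSbdd : BddAbove S := ⟨t, fun r hr => hr.1.2⟩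
    set τ := sSup S with hτdef
    have hτ0 : 0 ≤ τ := le_csSup hSbdd h0S
    have hτt : τ ≤ t := csSup_le hSne fun r hr => hr.1.2
    have hlt : ∀ s, 0 ≤ s → s < τ → z s ∈ V' := by
      intro s hs hsτ
      obtain ⟨r, hrS, hsr⟩ := exists_lt_of_lt_csSup hSne hsτ
      exact hrS.2 s ⟨hs, hsr.le⟩
    have hτV' : z τ ∈ V' := by
      by_contra hzτ
      have hcont := hzcont τ (mem_Ici.mpr hτ0)
      have hev : ∀ᶠ s in nhdsWithin τ (Ici 0), z s ∉ V' :=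
        hcont (hV'comp.isClosed.isOpen_compl.mem_nhds hzτ)
      rw [Filter.Eventually, Metric.mem_nhdsWithin_iff] at hev
      obtain ⟨δ, hδ, hev⟩ := hev
      rcases eq_or_lt_of_le hτ0 with h0 | h0
      · exact hzτ (by rw [← h0, hz0']; exact hz0V')
      · obtain ⟨r, hrS, hr⟩ := exists_lt_of_lt_csSup hSne
          (show max (τ - δ) 0 < τ from max_lt (by linarith) h0)
        have hr0 : 0 ≤ r := le_of_lt (lt_of_le_of_lt (le_max_right _ _) hr)
        have hrτ : r ≤ τ := le_csSup hSbdd hrS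
        have hrV' : z r ∈ V' := hrS.2 r ⟨hr0, le_rfl⟩
        have hrball : r ∈ ball τ δ ∩ Ici 0 := by
          constructor
          · rw [mem_ball, Real.dist_eq, abs_sub_lt_iff]
            have := lt_of_le_of_lt (le_max_left (τ - δ) 0) hr
            constructor <;> linarith
          · exact hr0
        exact (hev hrball) hrV'
    have hτS : τ ∈ S := by
      refine ⟨⟨hτ0, hτt⟩, fun s hs => ?_⟩
      rcases eq_or_lt_of_le hs.2 with h | h
      · rw [h]; exact hτV'
      · exact hlt s hs.1 h
    have hτeq : τ = t := by
      by_contra hne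
      have hτlt : τ < t := lt_of_le_of_ne hτt hne
      have hcont := hzcont τ (mem_Ici.mpr hτ0)
      have hev : ∀ᶠ s in nhdsWithin τ (Ici 0), z s ∈ U :=
        hcont (hUopen.mem_nhds (hV'U hτV'))
      rw [Filter.Eventually, Metric.mem_nhdsWithin_iff] at hev
      obtain ⟨δ, hδ, hev⟩ := hev
      set r := min t (τ + δ / 2) with hrdef
      have hτr : τ < r := lt_min hτlt (by linarith)
      have hr0 : 0 ≤ r := hτ0.trans hτr.le
      have hrt : r ≤ t := min_le_left _ _
      have hUbarmem : ∀ s ∈ Icc (0:ℝ) r, z s ∈ Ubar := by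
        intro s hs
        rcases le_or_gt s τ with h | h
        · exact hUUbar (hV'U (hτS.2 s ⟨hs.1, h⟩))
        · refine hUUbar (hev ⟨?_, hs.1⟩)
          rw [mem_ball, Real.dist_eq, abs_sub_lt_iff]
          have hs2 : s ≤ τ + δ / 2 := hs.2.trans (min_le_right _ _)
          constructor <;> linarith
      have hbzr : ∀ s ∈ Icc (0:ℝ) r, b (z s) = b z0 := by
        intro s hs
        have h := hbconst z (fun s => φ (z s)) r hr0 (hzcont.mono Icc_subset_Ici_self) ?_ s hs
        · rw [h, hz0']
        · intro s' hs'
          refine ⟨hUbarΩ (hUbarmem s' hs'), ?_⟩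
          have hd := (hzderiv s' hs'.1).mono (Ici_subset_Ici.mpr hs'.1)
          simpa only [hGdef] using hd
      have hrS : r ∈ S := ⟨⟨hr0, hrt⟩, fun s hs => htrap _ (hUbarmem s hs) (hbzr s hs)⟩
      exact absurd (le_csSup hSbdd hrS) (not_le.mpr hτr)
    intro s hs
    rw [← hτeq] at hs
    exact hτS.2 s hs
  have hzV' : ∀ t : ℝ, 0 ≤ t → z t ∈ V' := fun t ht => hmaster t ht t ⟨ht, le_rfl⟩
  have hzΩ : ∀ t : ℝ, 0 ≤ t → z t ∈ Ω := fun t ht => hV'Ω (hzV' t ht)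
  have hzUbar : ∀ t : ℝ, 0 ≤ t → z t ∈ Ubar := fun t ht => hUUbar (hV'U (hzV' t ht))
  have hbz : ∀ t : ℝ, 0 ≤ t → ∀ s ∈ Icc (0:ℝ) t, b (z s) = b z0 := by
    intro t ht s hs
    have h := hbconst z (fun s => φ (z s)) t ht (hzcont.mono Icc_subset_Ici_self) ?_ s hs
    · rw [h, hz0']
    · intro s' hs'
      refine ⟨hV'Ω (hmaster t ht s' hs'), ?_⟩
      have hd := (hzderiv s' hs'.1).mono (Ici_subset_Ici.mpr hs'.1)
      simpa only [hGdef] using hd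
  have hzC : ∀ t : ℝ, 0 ≤ t → z t ∈ connectedComponentIn Kset z0 := by
    intro t ht
    have himage : z '' Icc 0 t ⊆ Kset := by
      rintro x ⟨s, hs, rfl⟩
      exact ⟨subset_closure (hV'Ω (hmaster t ht s hs)), hbz t ht s hs⟩
    have hpre : IsPreconnected (z '' Icc 0 t) :=
      isPreconnected_Icc.image z (hzcont.mono Icc_subset_Ici_self)
    have hz0mem : z0 ∈ z '' Icc 0 t := ⟨0, ⟨le_rfl, ht⟩, hz0'⟩
    exact hpre.subset_connectedComponentIn hz0mem himage ⟨t, ⟨ht, le_rfl⟩, rfl⟩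
  refine ⟨z, hz0', fun t ht => ?_, fun w hw0 hw t ht => ?_⟩
  · have ht' : (0:ℝ) ≤ t := ht
    refine ⟨hzΩ t ht', hzC t ht', hbz t ht' t ⟨ht', le_rfl⟩, ?_⟩
    have h := hzderiv t ht'
    simpa only [hGdef, hφ1' _ (hzUbar t ht'), one_smul, hFdef] using h
  · have ht' : (0:ℝ) ≤ t := ht
    have hwcont : ContinuousOn w (Ici 0) := fun s hs => ((hw s hs).2).continuousWithinAt
    have hwb : ∀ r : ℝ, 0 ≤ r → ∀ s ∈ Icc (0:ℝ) r, b (w s) = b z0 := by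
      intro r hr s hs
      have h := hbconst w (fun _ => 1) r hr (hwcont.mono Icc_subset_Ici_self) ?_ s hs
      · rw [h, hw0]
      · intro s' hs'
        refine ⟨(hw s' (mem_Ici.mpr hs'.1)).1, ?_⟩
        have hd := ((hw s' (mem_Ici.mpr hs'.1)).2).mono (Ici_subset_Ici.mpr hs'.1)
        simpa only [one_smul, hFdef] using hd
    have hwC : ∀ s : ℝ, 0 ≤ s → w s ∈ connectedComponentIn Kset z0 := by
      intro s hs
      have himage : w '' Icc 0 s ⊆ Kset := by
        rintro x ⟨u, hu, rfl⟩
        exact ⟨subset_closure (hw u (mem_Ici.mpr hu.1)).1, hwb s hs u hu⟩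
      have hpre : IsPreconnected (w '' Icc 0 s) :=
        isPreconnected_Icc.image w (hwcont.mono Icc_subset_Ici_self)
      have hz0mem : z0 ∈ w '' Icc 0 s := ⟨0, ⟨le_rfl, hs⟩, hw0⟩
      exact hpre.subset_connectedComponentIn hz0mem himage ⟨s, ⟨hs, le_rfl⟩, rfl⟩
    have hwG : ∀ s : ℝ, 0 ≤ s → HasDerivWithinAt w (G (w s)) (Ici 0) s := by
      intro s hs
      have hmemU : w s ∈ Ubar := hUUbar (hV'U (hCCsub (hwC s hs)))
      have hd := (hw s (mem_Ici.mpr hs)).2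
      simpa only [hGdef, hφ1' _ hmemU, one_smul, hFdef] using hd
    have key := ODE_solution_unique (v := fun _ x => G x) (K := L) (f := w) (g := z)
      (a := 0) (b := t) (fun _ => hL)
      (hwcont.mono Icc_subset_Ici_self)
      (fun s hs => (hwG s hs.1).mono (Ici_subset_Ici.mpr hs.1))
      (hzcont.mono Icc_subset_Ici_self)
      (fun s hs => (hzderiv s hs.1).mono (Ici_subset_Ici.mpr hs.1))
      (hw0.trans hz0'.symm)
    exact key ⟨ht', le_rfl⟩
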